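/- For all z with 0 ≤ z < 1 and all real x, the series ∑_{k=0}^∞ z^k (1/(√π · k! · 2^k)) H_k(x)² e^{-x²} converges and equals (1/√(π(1-z²))) · exp(-x² (1-z)/(1+z)), where H_k are the (physicists') Hermite polynomials. -/

import Mathlib

open MeasureTheory Real Complex Filter Topology



/-- The physicists' Hermite polynomials, via the Rodrigues formula
`H_k(x) = (-1)^k e^{x²} (d/dx)^k e^{-x²}`. -/
noncomputable def physHermite (k : ℕ) (x : ℝ) : ℝ :=
  (-1 : ℝ) ^ k * Real.exp (x ^ 2) * iteratedDeriv k (fun y => Real.exp (-(y ^ 2))) x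

noncomputable def mehP : ℕ → Polynomial ℝ
  | 0 => 1
  | (n+1) => Polynomial.C 2 * Polynomial.X * mehP n - Polynomial.derivative (mehP n)

lemma mehP_iteratedDeriv (n : ℕ) :
    iteratedDeriv n (fun y => Real.exp (-(y ^ 2))) =
      fun y => (-1 : ℝ) ^ n * (mehP n).eval y * Real.exp (-(y ^ 2)) := by
  induction n with
  | zero => simp [mehP]
  | succ n ih =>
    rw [iteratedDeriv_succ, ih]
    funext y
    have h1 : HasDerivAt (fun y : ℝ => (-1 : ℝ) ^ n * (mehP n).eval y * Real.exp (-(y ^ 2)))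
        ((-1 : ℝ) ^ (n+1) * (mehP (n+1)).eval y * Real.exp (-(y ^ 2))) y := by
      have hp := (mehP n).hasDerivAt y
      have he : HasDerivAt (fun y : ℝ => Real.exp (-(y ^ 2)))
          (Real.exp (-(y ^ 2)) * (-(2 * y))) y := by
        have : HasDerivAt (fun y : ℝ => -(y ^ 2)) (-(2 * y)) y := by
          simpa using (hasDerivAt_pow 2 y).fun_neg
        exact this.exp
      have := ((hp.const_mul ((-1:ℝ) ^ n)).fun_mul he)
      refine this.congr_deriv ?_
      simp only [mehP, Polynomial.eval_sub, Polynomial.eval_mul, Polynomial.eval_C,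
        Polynomial.eval_X, pow_succ]
      ring
    exact h1.deriv

lemma physHermite_eq_eval (k : ℕ) (x : ℝ) : physHermite k x = (mehP k).eval x := by
  rw [physHermite, mehP_iteratedDeriv]
  rw [show (-1:ℝ)^k * Real.exp (x^2) * ((-1:ℝ)^k * (mehP k).eval x * Real.exp (-(x^2)))
    = ((-1:ℝ)^k)^2 * (mehP k).eval x * (Real.exp (x^2) * Real.exp (-(x^2))) by ring]
  rw [← Real.exp_add]
  simp [← pow_mul, pow_mul']

lemma mehP_derivative (n : ℕ) :
    Polynomial.derivative (mehP (n+1)) = Polynomial.C (2 * (n+1) : ℝ) * mehP n := by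
  induction n with
  | zero => simp [mehP]
  | succ n ih =>
    have hdef : Polynomial.derivative (mehP n)
        = Polynomial.C 2 * Polynomial.X * mehP n - mehP (n+1) := by
      rw [show mehP (n+1) = Polynomial.C 2 * Polynomial.X * mehP n
          - Polynomial.derivative (mehP n) from rfl]
      ring
    show Polynomial.derivative (Polynomial.C 2 * Polynomial.X * mehP (n+1)
        - Polynomial.derivative (mehP (n+1))) = _
    rw [ih]
    simp only [Polynomial.derivative_sub, Polynomial.derivative_mul, Polynomial.derivative_C,
      Polynomial.derivative_X, ih, hdef]
    push_cast
    rw [show (2 * ((n:ℝ)+1+1)) = (2*((n:ℝ)+1)) + 2 by ring, Polynomial.C_add]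
    ring

lemma mehP_rec (n : ℕ) :
    mehP (n+2) = Polynomial.C 2 * Polynomial.X * mehP (n+1) - Polynomial.C (2*(n+1) : ℝ) * mehP n := by
  rw [show mehP (n+2) = Polynomial.C 2 * Polynomial.X * mehP (n+1)
      - Polynomial.derivative (mehP (n+1)) from rfl, mehP_derivative]


noncomputable def mehI (x : ℝ) (k : ℕ) : ℂ :=
  ∫ t : ℝ, ((x : ℂ) + t * Complex.I) ^ k * (Real.exp (-(t ^ 2)) : ℝ)





lemma meh_norm (x : ℝ) (k : ℕ) (t : ℝ) :
    ‖((x : ℂ) + t * Complex.I) ^ k * ((Real.exp (-(t ^ 2)) : ℝ) : ℂ)‖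
      = Real.sqrt (x ^ 2 + t ^ 2) ^ k * Real.exp (-(t ^ 2)) := by
  rw [norm_mul, norm_pow, Complex.norm_add_mul_I,
    Complex.norm_real, Real.norm_of_nonneg (Real.exp_pos _).le]

lemma meh_sqrt_pow_le {l a : ℝ} (hl : 0 < l) (ha : 0 ≤ a) (k : ℕ) :
    Real.sqrt a ^ k ≤ Real.sqrt ((k.factorial : ℝ) / l ^ k) * Real.exp (l * a / 2) := by
  have h1 : a ^ k ≤ (k.factorial : ℝ) / l ^ k * Real.exp (l * a) := by
    have : (l * a) ^ k / (k.factorial : ℝ) ≤ Real.exp (l * a) :=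
      Real.pow_div_factorial_le_exp (l * a) (mul_nonneg hl.le ha) k
    rw [div_le_iff₀ (by positivity)] at this
    rw [mul_pow] at this
    calc a ^ k = l ^ k * a ^ k / l ^ k := by field_simp
    _ ≤ Real.exp (l * a) * (k.factorial : ℝ) / l ^ k := by
        apply div_le_div_of_nonneg_right ?_ (by positivity)
        · exact this
    _ = (k.factorial : ℝ) / l ^ k * Real.exp (l * a) := by ring
  have h2 : Real.sqrt a ^ k = Real.sqrt (a ^ k) := by
    rw [show a ^ k = (Real.sqrt a ^ k) ^ 2 by
        rw [← pow_mul, mul_comm, pow_mul, Real.sq_sqrt ha],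
      Real.sqrt_sq (pow_nonneg (Real.sqrt_nonneg a) k)]
  rw [h2]
  calc Real.sqrt (a ^ k) ≤ Real.sqrt ((k.factorial : ℝ) / l ^ k * Real.exp (l * a)) :=
        Real.sqrt_le_sqrt h1
  _ = Real.sqrt ((k.factorial : ℝ) / l ^ k) * Real.sqrt (Real.exp (l * a)) :=
        Real.sqrt_mul (by positivity) _
  _ = Real.sqrt ((k.factorial : ℝ) / l ^ k) * Real.exp (l * a / 2) := by
        rw [Real.exp_half]

lemma meh_bound (x : ℝ) {l : ℝ} (hl : 0 < l) (k : ℕ) (t : ℝ) :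
    ‖((x : ℂ) + t * Complex.I) ^ k * ((Real.exp (-(t ^ 2)) : ℝ) : ℂ)‖
      ≤ Real.sqrt ((k.factorial : ℝ) / l ^ k) * Real.exp (l * x ^ 2 / 2)
          * Real.exp (-((1 - l / 2) * t ^ 2)) := by
  rw [meh_norm]
  have h1 := meh_sqrt_pow_le hl (by positivity : (0:ℝ) ≤ x ^ 2 + t ^ 2) k
  calc Real.sqrt (x ^ 2 + t ^ 2) ^ k * Real.exp (-(t ^ 2))
      ≤ (Real.sqrt ((k.factorial : ℝ) / l ^ k) * Real.exp (l * (x ^ 2 + t ^ 2) / 2))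
          * Real.exp (-(t ^ 2)) := by
        apply mul_le_mul_of_nonneg_right h1 (Real.exp_pos _).le
  _ = Real.sqrt ((k.factorial : ℝ) / l ^ k) * Real.exp (l * x ^ 2 / 2)
          * Real.exp (-((1 - l / 2) * t ^ 2)) := by
        rw [mul_assoc, mul_assoc, ← Real.exp_add, ← Real.exp_add]
        ring_nf

lemma meh_cont (x : ℝ) (k : ℕ) :
    Continuous (fun t : ℝ => ((x : ℂ) + t * Complex.I) ^ k * ((Real.exp (-(t ^ 2)) : ℝ) : ℂ)) := by
  fun_prop

lemma meh_integrable (x : ℝ) (k : ℕ) :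
    Integrable (fun t : ℝ => ((x : ℂ) + t * Complex.I) ^ k * ((Real.exp (-(t ^ 2)) : ℝ) : ℂ)) := by
  refine Integrable.mono' (g := fun t => Real.sqrt ((k.factorial : ℝ) / 1 ^ k)
      * Real.exp (1 * x ^ 2 / 2) * Real.exp (-((1 - 1 / 2) * t ^ 2))) ?_
    (meh_cont x k).aestronglyMeasurable
    (Filter.Eventually.of_forall fun t => meh_bound x one_pos k t)
  have h := integrable_exp_neg_mul_sq (show (0:ℝ) < 1 - 1/2 by norm_num)
  simp only [neg_mul] at h
  exact h.const_mul _

lemma meh_tendsto (x : ℝ) (m : ℕ) {F : Filter ℝ}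
    (hF : Tendsto (fun t : ℝ => t ^ 2) F atTop) :
    Tendsto (fun t : ℝ => ((x : ℂ) + t * Complex.I) ^ m * ((Real.exp (-(t ^ 2)) : ℝ) : ℂ))
      F (𝓝 0) := by
  apply squeeze_zero_norm (fun t => meh_bound x one_pos m t)
  have h1 : Tendsto (fun t : ℝ => -((1 - 1/2) * t ^ 2)) F atBot := by
    apply Filter.tendsto_neg_atTop_atBot.comp
    exact hF.const_mul_atTop (by norm_num)
  have := (Real.tendsto_exp_atBot.comp h1).const_mul
    (Real.sqrt ((m.factorial : ℝ) / 1 ^ m) * Real.exp (1 * x ^ 2 / 2))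
  simpa [mul_assoc] using this

lemma meh_hasDerivAt (x : ℝ) (m : ℕ) (t : ℝ) :
    HasDerivAt (fun t : ℝ => ((x : ℂ) + t * Complex.I) ^ m * ((Real.exp (-(t ^ 2)) : ℝ) : ℂ))
      ((m : ℂ) * Complex.I * (((x : ℂ) + t * Complex.I) ^ (m-1) * (Real.exp (-(t ^ 2)) : ℝ))
        + (2 * Complex.I) * (((x : ℂ) + t * Complex.I) ^ (m+1) * (Real.exp (-(t ^ 2)) : ℝ))
        - (2 * Complex.I * x) * (((x : ℂ) + t * Complex.I) ^ m * (Real.exp (-(t ^ 2)) : ℝ))) t := by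
  have hfun : (fun t : ℝ => ((x : ℂ) + t * Complex.I) ^ m * ((Real.exp (-(t ^ 2)) : ℝ) : ℂ))
      = fun t : ℝ => ((x : ℂ) + (t:ℂ) * Complex.I) ^ m * Complex.exp (-((t:ℂ) ^ 2)) := by
    funext t
    push_cast [Complex.ofReal_exp]
    ring_nf
  rw [hfun]
  have hp : HasDerivAt (fun w : ℂ => ((x : ℂ) + w * Complex.I) ^ m)
      ((m : ℂ) * ((x : ℂ) + (t:ℂ) * Complex.I) ^ (m-1) * Complex.I) (t : ℂ) := by
    simpa using (((hasDerivAt_id (t:ℂ)).mul_const Complex.I).const_add (x:ℂ)).fun_pow m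
  have he : HasDerivAt (fun w : ℂ => Complex.exp (-(w ^ 2)))
      (Complex.exp (-((t:ℂ) ^ 2)) * (-(2 * (t:ℂ)))) (t:ℂ) := by
    have h2 : HasDerivAt (fun w : ℂ => -(w ^ 2)) (-(2 * (t:ℂ))) (t:ℂ) := by
      simpa using (hasDerivAt_pow 2 (t:ℂ)).fun_neg
    exact h2.cexp
  have := (hp.fun_mul he).comp_ofReal
  convert this using 1
  have hre : ((Real.exp (-(t ^ 2)) : ℝ) : ℂ) = Complex.exp (-((t:ℂ) ^ 2)) := by
    push_cast [Complex.ofReal_exp]; ring_nf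
  rw [hre]
  have hsplit : ((x : ℂ) + (t:ℂ) * Complex.I) ^ (m+1)
      = ((x : ℂ) + (t:ℂ) * Complex.I) ^ m * ((x : ℂ) + (t:ℂ) * Complex.I) := pow_succ _ _
  rw [hsplit]
  have hI : Complex.I * Complex.I = -1 := Complex.I_mul_I
  ring_nf
  rw [Complex.I_sq]
  ring

lemma meh_deriv_integral_zero (x : ℝ) (m : ℕ) :
    ∫ t : ℝ, ((m : ℂ) * Complex.I * (((x : ℂ) + t * Complex.I) ^ (m-1) * (Real.exp (-(t ^ 2)) : ℝ))
        + (2 * Complex.I) * (((x : ℂ) + t * Complex.I) ^ (m+1) * (Real.exp (-(t ^ 2)) : ℝ))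
        - (2 * Complex.I * x) * (((x : ℂ) + t * Complex.I) ^ m * (Real.exp (-(t ^ 2)) : ℝ))) = 0 := by
  set u := fun t : ℝ => ((x : ℂ) + t * Complex.I) ^ m * ((Real.exp (-(t ^ 2)) : ℝ) : ℂ) with hu
  set u' := fun t : ℝ =>
      ((m : ℂ) * Complex.I * (((x : ℂ) + t * Complex.I) ^ (m-1) * (Real.exp (-(t ^ 2)) : ℝ))
        + (2 * Complex.I) * (((x : ℂ) + t * Complex.I) ^ (m+1) * (Real.exp (-(t ^ 2)) : ℝ))
        - (2 * Complex.I * x) * (((x : ℂ) + t * Complex.I) ^ m * (Real.exp (-(t ^ 2)) : ℝ))) with hu'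
  have hderiv : ∀ t : ℝ, HasDerivAt u (u' t) t := fun t => meh_hasDerivAt x m t
  have hint : Integrable u' := by
    apply Integrable.sub
    apply Integrable.add
    · exact ((meh_integrable x (m-1)).const_mul _)
    · exact ((meh_integrable x (m+1)).const_mul _)
    · exact ((meh_integrable x m).const_mul _)
  have htop : Tendsto u atTop (𝓝 0) := meh_tendsto x m (tendsto_pow_atTop two_ne_zero)
  have hbot : Tendsto u atBot (𝓝 0) := by
    apply meh_tendsto x m
    have h1 : Tendsto (fun t : ℝ => |t| ^ 2) atBot atTop :=
      (tendsto_pow_atTop two_ne_zero).comp tendsto_abs_atBot_atTop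
    simpa [sq_abs] using h1
  have h1 : ∫ t in Set.Iic (0:ℝ), u' t = u 0 - 0 :=
    integral_Iic_of_hasDerivAt_of_tendsto (hderiv 0).continuousAt.continuousWithinAt
      (fun t _ => hderiv t) hint.integrableOn hbot
  have h2 : ∫ t in Set.Ioi (0:ℝ), u' t = 0 - u 0 :=
    integral_Ioi_of_hasDerivAt_of_tendsto (hderiv 0).continuousAt.continuousWithinAt
      (fun t _ => hderiv t) hint.integrableOn htop
  rw [← intervalIntegral.integral_Iic_add_Ioi (b := (0:ℝ)) hint.integrableOn hint.integrableOn, h1, h2]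
  ring

lemma mehI_rec (x : ℝ) (m : ℕ) :
    mehI x (m+1) = (x : ℂ) * mehI x m - ((m : ℂ) / 2) * mehI x (m-1) := by
  have h0 := meh_deriv_integral_zero x m
  have hA : Integrable (fun t : ℝ =>
      (m : ℂ) * Complex.I * (((x : ℂ) + t * Complex.I) ^ (m-1) * (Real.exp (-(t ^ 2)) : ℝ))) :=
    (meh_integrable x (m-1)).const_mul _
  have hB : Integrable (fun t : ℝ =>
      (2 * Complex.I) * (((x : ℂ) + t * Complex.I) ^ (m+1) * (Real.exp (-(t ^ 2)) : ℝ))) :=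
    (meh_integrable x (m+1)).const_mul _
  have hC : Integrable (fun t : ℝ =>
      (2 * Complex.I * (x:ℂ)) * (((x : ℂ) + t * Complex.I) ^ m * (Real.exp (-(t ^ 2)) : ℝ))) :=
    (meh_integrable x m).const_mul _
  have hAB : Integrable (fun t : ℝ =>
      (m : ℂ) * Complex.I * (((x : ℂ) + t * Complex.I) ^ (m-1) * (Real.exp (-(t ^ 2)) : ℝ))
        + (2 * Complex.I) * (((x : ℂ) + t * Complex.I) ^ (m+1) * (Real.exp (-(t ^ 2)) : ℝ))) :=
    hA.add hB
  rw [integral_sub hAB hC, integral_add hA hB,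
    integral_const_mul, integral_const_mul, integral_const_mul] at h0
  have h0' : (m : ℂ) * Complex.I * mehI x (m-1) + 2 * Complex.I * mehI x (m+1)
      - 2 * Complex.I * x * mehI x m = 0 := h0
  have hI := Complex.I_ne_zero
  have h2 : (2 : ℂ) * Complex.I * (mehI x (m+1) - ((x:ℂ) * mehI x m - ((m : ℂ) / 2) * mehI x (m-1))) = 0 := by
    rw [← h0']; ring
  rcases mul_eq_zero.mp h2 with h | h
  · exact absurd h (by simp [hI])
  · linear_combination h

lemma mehI_zero (x : ℝ) : mehI x 0 = ((Real.sqrt Real.pi : ℝ) : ℂ) := by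
  have h1 : mehI x 0 = ((∫ t : ℝ, Real.exp (-(t^2)) : ℝ) : ℂ) := by
    rw [mehI]
    simp only [pow_zero, one_mul]
    exact integral_ofReal
  rw [h1]
  norm_cast
  have := integral_gaussian 1
  simpa [neg_mul] using this

lemma mehP_eval_sqrtpi (x : ℝ) (k : ℕ) :
    (((mehP k).eval x : ℝ) : ℂ) * ((Real.sqrt Real.pi : ℝ) : ℂ) = 2 ^ k * mehI x k := by
  induction k using Nat.strong_induction_on with
  | _ k ih =>
    match k with
    | 0 => simp [mehP, mehI_zero]
    | 1 =>
      have h1 : mehI x 1 = (x:ℂ) * mehI x 0 := by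
        have := mehI_rec x 0
        simpa using this
      have he : (mehP 1).eval x = 2 * x := by
        rw [show mehP 1 = Polynomial.C 2 * Polynomial.X * mehP 0
            - Polynomial.derivative (mehP 0) from rfl]
        simp [mehP]
      rw [he, h1, mehI_zero]
      push_cast
      ring
    | (n+2) =>
      have ih1 := ih (n+1) (by omega)
      have ih0 := ih n (by omega)
      have hrec : mehI x (n+2) = (x:ℂ) * mehI x (n+1) - (((n:ℂ)+1)/2) * mehI x n := by
        have h := mehI_rec x (n+1)
        push_cast at h
        simpa using h
      have heval : (mehP (n+2)).eval x = 2 * x * (mehP (n+1)).eval x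
          - 2 * (n+1) * (mehP n).eval x := by
        rw [mehP_rec]
        simp only [Polynomial.eval_sub, Polynomial.eval_mul, Polynomial.eval_C,
          Polynomial.eval_X]
      rw [heval]
      push_cast
      linear_combination (2*(x:ℂ)) * ih1 - (2*((n:ℂ)+1)) * ih0 - (2:ℂ)^(n+2) * hrec

lemma meh_gauss_int {b : ℝ} (hb : 0 < b) :
    ∫ t : ℝ, Real.exp (-(b * t ^ 2)) = Real.sqrt (Real.pi / b) := by
  have := integral_gaussian b
  simpa [neg_mul] using this

lemma meh_exp_int_integrable {b : ℝ} (hb : 0 < b) :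
    Integrable (fun t : ℝ => Real.exp (-(b * t ^ 2))) := by
  have h := integrable_exp_neg_mul_sq hb
  simpa [neg_mul] using h

lemma meh_int_norm_le (x : ℝ) {l : ℝ} (hl : 0 < l) (hl2 : l < 2) (k : ℕ) :
    ∫ t : ℝ, ‖((x : ℂ) + t * Complex.I) ^ k * ((Real.exp (-(t ^ 2)) : ℝ) : ℂ)‖
      ≤ Real.sqrt ((k.factorial : ℝ) / l ^ k) * Real.exp (l * x ^ 2 / 2)
          * Real.sqrt (Real.pi / (1 - l / 2)) := by
  have hb : 0 < 1 - l / 2 := by linarith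
  have h1 : ∫ t : ℝ, ‖((x : ℂ) + t * Complex.I) ^ k * ((Real.exp (-(t ^ 2)) : ℝ) : ℂ)‖
      ≤ ∫ t : ℝ, Real.sqrt ((k.factorial : ℝ) / l ^ k) * Real.exp (l * x ^ 2 / 2)
          * Real.exp (-((1 - l / 2) * t ^ 2)) := by
    apply integral_mono (meh_integrable x k).norm
      (((meh_exp_int_integrable hb).const_mul _))
    exact fun t => meh_bound x hl k t
  calc _ ≤ _ := h1
  _ = _ := by rw [integral_const_mul, meh_gauss_int hb]

lemma meh_normI_le (x : ℝ) {l : ℝ} (hl : 0 < l) (hl2 : l < 2) (k : ℕ) :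
    ‖mehI x k‖ ≤ Real.sqrt ((k.factorial : ℝ) / l ^ k) * Real.exp (l * x ^ 2 / 2)
          * Real.sqrt (Real.pi / (1 - l / 2)) :=
  le_trans (norm_integral_le_integral_norm _) (meh_int_norm_le x hl hl2 k)

lemma meh_sqrt_mul_le {a b : ℝ} (ha : 0 ≤ a) (hb : 0 ≤ b) :
    Real.sqrt (a * b) ≤ (a + b) / 2 := by
  rw [show (a+b)/2 = Real.sqrt (((a+b)/2)^2) from
    (Real.sqrt_sq (by positivity)).symm]
  apply Real.sqrt_le_sqrt
  nlinarith [sq_nonneg (a - b)]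

lemma meh_pow_mul_sqrt_fact (r : ℝ) (hr : 0 ≤ r) (k : ℕ) :
    r ^ k / (k.factorial : ℝ) * Real.sqrt (k.factorial : ℝ)
      ≤ ((2 * r ^ 2) ^ k / (k.factorial : ℝ) + (1/2) ^ k) / 2 := by
  have hfac : (0:ℝ) < (k.factorial : ℝ) := by exact_mod_cast k.factorial_pos
  have hs : (0:ℝ) < Real.sqrt (k.factorial : ℝ) := Real.sqrt_pos.mpr hfac
  have h1 : r ^ k / (k.factorial : ℝ) * Real.sqrt (k.factorial : ℝ)
      = Real.sqrt ((r ^ k) ^ 2 / (k.factorial : ℝ)) := by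
    rw [Real.sqrt_div (by positivity), Real.sqrt_sq (by positivity)]
    rw [show (k.factorial : ℝ) = Real.sqrt (k.factorial : ℝ) * Real.sqrt (k.factorial : ℝ) from
      (Real.mul_self_sqrt hfac.le).symm]
    field_simp
    rw [Real.sqrt_sq hs.le]
  rw [h1, show (r ^ k) ^ 2 / (k.factorial : ℝ)
      = ((2 * r ^ 2) ^ k / (k.factorial : ℝ)) * ((1/2) ^ k) by
    rw [div_mul_eq_mul_div, ← mul_pow, ← pow_mul, mul_comm k 2, pow_mul]
    congr 2
    ring]
  exact meh_sqrt_mul_le (by positivity) (by positivity)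

/-- Step 1: generating function of the `mehI`. -/
lemma meh_step1 (x : ℝ) (w : ℂ) :
    HasSum (fun k : ℕ => w ^ k / (k.factorial : ℂ) * mehI x k)
      (((Real.sqrt Real.pi : ℝ) : ℂ) * Complex.exp (w * x - w ^ 2 / 4)) := by
  set C := Real.exp (1 * x ^ 2 / 2) * Real.sqrt (Real.pi / (1 - 1 / 2)) with hC
  have hCpos : 0 ≤ C := by positivity
  have hF_int : ∀ k : ℕ, Integrable (fun t : ℝ =>
      w ^ k / (k.factorial : ℂ) * (((x : ℂ) + t * Complex.I) ^ k * ((Real.exp (-(t ^ 2)) : ℝ) : ℂ))) :=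
    fun k => (meh_integrable x k).const_mul _
  have hle : ∀ k : ℕ, (∫ t : ℝ,
      ‖w ^ k / (k.factorial : ℂ) * (((x : ℂ) + t * Complex.I) ^ k * ((Real.exp (-(t ^ 2)) : ℝ) : ℂ))‖)
      ≤ C / 2 * ((2 * ‖w‖ ^ 2) ^ k / (k.factorial : ℝ) + (1/2) ^ k) := by
    intro k
    have heq : (∫ t : ℝ,
        ‖w ^ k / (k.factorial : ℂ) * (((x : ℂ) + t * Complex.I) ^ k * ((Real.exp (-(t ^ 2)) : ℝ) : ℂ))‖)
        = (‖w‖ ^ k / (k.factorial : ℝ)) * ∫ t : ℝ,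
          ‖(((x : ℂ) + t * Complex.I) ^ k * ((Real.exp (-(t ^ 2)) : ℝ) : ℂ))‖ := by
      simp_rw [norm_mul]
      rw [integral_const_mul, norm_div, norm_pow]
      norm_cast
    rw [heq]
    have h2 : (‖w‖ ^ k / (k.factorial : ℝ)) * (∫ t : ℝ,
        ‖(((x : ℂ) + t * Complex.I) ^ k * ((Real.exp (-(t ^ 2)) : ℝ) : ℂ))‖)
        ≤ (‖w‖ ^ k / (k.factorial : ℝ)) * (Real.sqrt (k.factorial : ℝ) * C) := by
      apply mul_le_mul_of_nonneg_left _ (by positivity)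
      calc _ ≤ _ := meh_int_norm_le x one_pos one_lt_two k
      _ = Real.sqrt (k.factorial : ℝ) * C := by rw [hC, one_pow, div_one, mul_assoc]
    calc _ ≤ _ := h2
    _ = (‖w‖ ^ k / (k.factorial : ℝ) * Real.sqrt (k.factorial : ℝ)) * C := by ring
    _ ≤ ((2 * ‖w‖ ^ 2) ^ k / (k.factorial : ℝ) + (1/2) ^ k) / 2 * C := by
      exact mul_le_mul_of_nonneg_right (meh_pow_mul_sqrt_fact ‖w‖ (norm_nonneg w) k) hCpos
    _ = C / 2 * ((2 * ‖w‖ ^ 2) ^ k / (k.factorial : ℝ) + (1/2) ^ k) := by ring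
  have hsummable : Summable (fun k : ℕ =>
      C / 2 * ((2 * ‖w‖ ^ 2) ^ k / (k.factorial : ℝ) + (1/2) ^ k)) := by
    apply Summable.mul_left
    exact (Real.summable_pow_div_factorial _).add
      (summable_geometric_of_lt_one (by norm_num) (by norm_num))
  have hF_sum : Summable fun k : ℕ => ∫ t : ℝ,
      ‖w ^ k / (k.factorial : ℂ) * (((x : ℂ) + t * Complex.I) ^ k * ((Real.exp (-(t ^ 2)) : ℝ) : ℂ))‖ :=
    Summable.of_nonneg_of_le (fun k => integral_nonneg fun t => norm_nonneg _) hle hsummable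
  have key := hasSum_integral_of_summable_integral_norm hF_int hF_sum
  have hterm : ∀ k : ℕ, (∫ t : ℝ,
      w ^ k / (k.factorial : ℂ) * (((x : ℂ) + t * Complex.I) ^ k * ((Real.exp (-(t ^ 2)) : ℝ) : ℂ)))
      = w ^ k / (k.factorial : ℂ) * mehI x k := fun k => integral_const_mul _ _
  have htsum : ∀ t : ℝ, (∑' k : ℕ,
      w ^ k / (k.factorial : ℂ) * (((x : ℂ) + t * Complex.I) ^ k * ((Real.exp (-(t ^ 2)) : ℝ) : ℂ)))
      = Complex.exp (w * ((x : ℂ) + t * Complex.I)) * ((Real.exp (-(t ^ 2)) : ℝ) : ℂ) := by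
    intro t
    have hs := (NormedSpace.expSeries_div_hasSum_exp (w * ((x : ℂ) + t * Complex.I))).mul_right
      ((Real.exp (-(t ^ 2)) : ℝ) : ℂ)
    rw [← Complex.exp_eq_exp_ℂ] at hs
    have hfun : (fun k : ℕ => (w * ((x : ℂ) + t * Complex.I)) ^ k / (k.factorial : ℂ)
        * ((Real.exp (-(t ^ 2)) : ℝ) : ℂ))
        = fun k : ℕ => w ^ k / (k.factorial : ℂ)
          * (((x : ℂ) + t * Complex.I) ^ k * ((Real.exp (-(t ^ 2)) : ℝ) : ℂ)) := by
      funext k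
      rw [mul_pow]
      ring
    rw [hfun] at hs
    exact hs.tsum_eq
  have hval : (∫ t : ℝ, Complex.exp (w * ((x : ℂ) + t * Complex.I)) * ((Real.exp (-(t ^ 2)) : ℝ) : ℂ))
      = ((Real.sqrt Real.pi : ℝ) : ℂ) * Complex.exp (w * x - w ^ 2 / 4) := by
    have hfun : (fun t : ℝ => Complex.exp (w * ((x : ℂ) + t * Complex.I)) * ((Real.exp (-(t ^ 2)) : ℝ) : ℂ))
        = fun t : ℝ => Complex.exp ((-1) * (t:ℂ) ^ 2 + (w * Complex.I) * (t:ℂ) + w * x) := by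
      funext t
      rw [show ((Real.exp (-(t ^ 2)) : ℝ) : ℂ) = Complex.exp (-((t:ℂ)^2)) by
        push_cast [Complex.ofReal_exp]; ring_nf]
      rw [← Complex.exp_add]
      congr 1
      ring
    rw [hfun, integral_cexp_quadratic (by norm_num : ((-1 : ℂ)).re < 0)]
    congr 1
    · rw [show ((Real.pi : ℂ)) / -(-1) = ((Real.pi : ℝ) : ℂ) by norm_num]
      rw [Real.sqrt_eq_rpow, Complex.ofReal_cpow Real.pi_pos.le]
      norm_num
    · congr 1
      have : (w * Complex.I) ^ 2 = -(w ^ 2) := by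
        rw [mul_pow, Complex.I_sq]
        ring
      rw [this]
      ring
  rw [funext hterm] at key
  rw [funext htsum, hval] at key
  exact key

/-- Step 2: Mehler diagonal sum in terms of `mehI`. -/
lemma meh_step2 (x z : ℝ) (hz0 : 0 ≤ z) (hz1 : z < 1) :
    HasSum (fun k : ℕ => (2 * (z:ℂ)) ^ k / (k.factorial : ℂ) * (mehI x k * mehI x k))
      (((Real.sqrt Real.pi * Real.sqrt (Real.pi / (1 - z ^ 2)) : ℝ) : ℂ)
        * Complex.exp (2 * (x:ℂ) ^ 2 * z / (1 + z))) := by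
  have hl0 : (0:ℝ) < 1 + z := by linarith
  have hl2 : (1:ℝ) + z < 2 := by linarith
  set l := 1 + z with hldef
  set B : ℕ → ℝ := fun k => Real.sqrt ((k.factorial : ℝ) / l ^ k) * Real.exp (l * x ^ 2 / 2)
      * Real.sqrt (Real.pi / (1 - l / 2)) with hB
  have hBnonneg : ∀ k, 0 ≤ B k := fun k => by positivity
  have hF_int : ∀ k : ℕ, Integrable (fun s : ℝ =>
      (2 * (z:ℂ)) ^ k / (k.factorial : ℂ) * mehI x k
        * (((x : ℂ) + s * Complex.I) ^ k * ((Real.exp (-(s ^ 2)) : ℝ) : ℂ))) := by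
    intro k
    have := (meh_integrable x k).const_mul ((2 * (z:ℂ)) ^ k / (k.factorial : ℂ) * mehI x k)
    simpa [mul_assoc] using this
  have hle : ∀ k : ℕ, (∫ s : ℝ,
      ‖(2 * (z:ℂ)) ^ k / (k.factorial : ℂ) * mehI x k
        * (((x : ℂ) + s * Complex.I) ^ k * ((Real.exp (-(s ^ 2)) : ℝ) : ℂ))‖)
      ≤ (Real.exp (l * x ^ 2 / 2) * Real.sqrt (Real.pi / (1 - l / 2))) ^ 2
          * (2 * z / l) ^ k := by
    intro k
    have hfacpos : (0:ℝ) < (k.factorial : ℝ) := by exact_mod_cast k.factorial_pos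
    have heq : (∫ s : ℝ,
        ‖(2 * (z:ℂ)) ^ k / (k.factorial : ℂ) * mehI x k
          * (((x : ℂ) + s * Complex.I) ^ k * ((Real.exp (-(s ^ 2)) : ℝ) : ℂ))‖)
        = ((2 * z) ^ k / (k.factorial : ℝ) * ‖mehI x k‖) * ∫ s : ℝ,
          ‖(((x : ℂ) + s * Complex.I) ^ k * ((Real.exp (-(s ^ 2)) : ℝ) : ℂ))‖ := by
      simp_rw [norm_mul]
      rw [integral_const_mul, norm_div, norm_pow]
      congr 2
      rw [show (2 * (z:ℂ)) = (((2 * z : ℝ)) : ℂ) by push_cast; ring]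
      rw [Complex.norm_real, Real.norm_of_nonneg (by positivity), Complex.norm_natCast]
    rw [heq]
    have h1 : ‖mehI x k‖ ≤ B k := meh_normI_le x hl0 (by rw [hldef] at hl2 ⊢; exact hl2) k
    have h2 : (∫ s : ℝ, ‖(((x : ℂ) + s * Complex.I) ^ k * ((Real.exp (-(s ^ 2)) : ℝ) : ℂ))‖) ≤ B k :=
      meh_int_norm_le x hl0 (by rw [hldef] at hl2 ⊢; exact hl2) k
    set E := Real.exp (l * x ^ 2 / 2) * Real.sqrt (Real.pi / (1 - l / 2)) with hE
    have hBB : B k * B k = ((k.factorial : ℝ) / l ^ k) * E ^ 2 := by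
      rw [hB, hE]
      dsimp only
      rw [show Real.sqrt ((k.factorial : ℝ) / l ^ k) * Real.exp (l * x ^ 2 / 2)
            * Real.sqrt (Real.pi / (1 - l / 2))
          * (Real.sqrt ((k.factorial : ℝ) / l ^ k) * Real.exp (l * x ^ 2 / 2)
            * Real.sqrt (Real.pi / (1 - l / 2)))
          = (Real.sqrt ((k.factorial : ℝ) / l ^ k) * Real.sqrt ((k.factorial : ℝ) / l ^ k))
            * (Real.exp (l * x ^ 2 / 2) * Real.sqrt (Real.pi / (1 - l / 2))) ^ 2 by ring,
        Real.mul_self_sqrt (by positivity)]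
    have hlne : l ^ k ≠ 0 := by positivity
    calc (2 * z) ^ k / (k.factorial : ℝ) * ‖mehI x k‖ * (∫ s : ℝ,
          ‖(((x : ℂ) + s * Complex.I) ^ k * ((Real.exp (-(s ^ 2)) : ℝ) : ℂ))‖)
        ≤ (2 * z) ^ k / (k.factorial : ℝ) * B k * B k := by
          apply mul_le_mul (mul_le_mul_of_nonneg_left h1 (by positivity)) h2
            (integral_nonneg fun s => norm_nonneg _)
          positivity
    _ = (2 * z) ^ k / (k.factorial : ℝ) * (B k * B k) := by ring
    _ = E ^ 2 * ((2 * z) ^ k / l ^ k) := by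
        rw [hBB]
        field_simp
    _ = E ^ 2 * (2 * z / l) ^ k := by rw [div_pow]
  have hgeom : Summable (fun k : ℕ =>
      (Real.exp (l * x ^ 2 / 2) * Real.sqrt (Real.pi / (1 - l / 2))) ^ 2 * (2 * z / l) ^ k) := by
    apply Summable.mul_left
    apply summable_geometric_of_lt_one (by positivity)
    rw [hldef]
    rw [div_lt_one hl0]
    linarith
  have hF_sum : Summable fun k : ℕ => ∫ s : ℝ,
      ‖(2 * (z:ℂ)) ^ k / (k.factorial : ℂ) * mehI x k
        * (((x : ℂ) + s * Complex.I) ^ k * ((Real.exp (-(s ^ 2)) : ℝ) : ℂ))‖ :=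
    Summable.of_nonneg_of_le (fun k => integral_nonneg fun s => norm_nonneg _) hle hgeom
  have key := hasSum_integral_of_summable_integral_norm hF_int hF_sum
  have hterm : ∀ k : ℕ, (∫ s : ℝ,
      (2 * (z:ℂ)) ^ k / (k.factorial : ℂ) * mehI x k
        * (((x : ℂ) + s * Complex.I) ^ k * ((Real.exp (-(s ^ 2)) : ℝ) : ℂ)))
      = (2 * (z:ℂ)) ^ k / (k.factorial : ℂ) * (mehI x k * mehI x k) := by
    intro k
    rw [integral_const_mul]
    rw [show (∫ s : ℝ, ((x : ℂ) + s * Complex.I) ^ k * ((Real.exp (-(s ^ 2)) : ℝ) : ℂ)) = mehI x k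
      from rfl]
    ring
  have htsum : ∀ s : ℝ, (∑' k : ℕ,
      (2 * (z:ℂ)) ^ k / (k.factorial : ℂ) * mehI x k
        * (((x : ℂ) + s * Complex.I) ^ k * ((Real.exp (-(s ^ 2)) : ℝ) : ℂ)))
      = ((Real.sqrt Real.pi : ℝ) : ℂ)
          * Complex.exp ((2 * (z:ℂ) * ((x : ℂ) + s * Complex.I)) * x
              - (2 * (z:ℂ) * ((x : ℂ) + s * Complex.I)) ^ 2 / 4)
          * ((Real.exp (-(s ^ 2)) : ℝ) : ℂ) := by
    intro s
    have hs := (meh_step1 x (2 * (z:ℂ) * ((x : ℂ) + s * Complex.I))).mul_right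
      ((Real.exp (-(s ^ 2)) : ℝ) : ℂ)
    have hfun : (fun k : ℕ => (2 * (z:ℂ) * ((x : ℂ) + s * Complex.I)) ^ k / (k.factorial : ℂ)
        * mehI x k * ((Real.exp (-(s ^ 2)) : ℝ) : ℂ))
        = fun k : ℕ => (2 * (z:ℂ)) ^ k / (k.factorial : ℂ) * mehI x k
          * (((x : ℂ) + s * Complex.I) ^ k * ((Real.exp (-(s ^ 2)) : ℝ) : ℂ)) := by
      funext k
      rw [mul_pow]
      ring
    rw [hfun] at hs
    exact hs.tsum_eq
  have hval : (∫ s : ℝ, ((Real.sqrt Real.pi : ℝ) : ℂ)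
          * Complex.exp ((2 * (z:ℂ) * ((x : ℂ) + s * Complex.I)) * x
              - (2 * (z:ℂ) * ((x : ℂ) + s * Complex.I)) ^ 2 / 4)
          * ((Real.exp (-(s ^ 2)) : ℝ) : ℂ))
      = ((Real.sqrt Real.pi * Real.sqrt (Real.pi / (1 - z ^ 2)) : ℝ) : ℂ)
          * Complex.exp (2 * (x:ℂ) ^ 2 * z / (1 + z)) := by
    have hfun : (fun s : ℝ => ((Real.sqrt Real.pi : ℝ) : ℂ)
          * Complex.exp ((2 * (z:ℂ) * ((x : ℂ) + s * Complex.I)) * x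
              - (2 * (z:ℂ) * ((x : ℂ) + s * Complex.I)) ^ 2 / 4)
          * ((Real.exp (-(s ^ 2)) : ℝ) : ℂ))
        = fun s : ℝ => ((Real.sqrt Real.pi : ℝ) : ℂ)
          * Complex.exp (((z:ℂ) ^ 2 - 1) * (s:ℂ) ^ 2
              + (2 * z * x * (1 - z) * Complex.I) * (s:ℂ) + (2 * z - z ^ 2) * (x:ℂ) ^ 2) := by
      funext s
      rw [show ((Real.exp (-(s ^ 2)) : ℝ) : ℂ) = Complex.exp (-((s:ℂ)^2)) by
        push_cast [Complex.ofReal_exp]; ring_nf]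
      rw [mul_assoc, ← Complex.exp_add]
      congr 2
      linear_combination (-(z:ℂ)^2 * (s:ℂ)^2) * Complex.I_sq
    rw [hfun]
    rw [integral_const_mul]
    have hbre : (((z:ℂ) ^ 2 - 1)).re < 0 := by
      have : ((z:ℂ) ^ 2 - 1) = (((z^2 - 1 : ℝ)) : ℂ) := by push_cast; ring
      rw [this, Complex.ofReal_re]
      nlinarith
    rw [integral_cexp_quadratic hbre]
    have hz2 : (0:ℝ) < 1 - z ^ 2 := by nlinarith
    have hcpow : ((Real.pi : ℂ) / -((z:ℂ) ^ 2 - 1)) ^ (1/2 : ℂ)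
        = ((Real.sqrt (Real.pi / (1 - z ^ 2)) : ℝ) : ℂ) := by
      rw [show ((Real.pi : ℂ)) / -((z:ℂ) ^ 2 - 1) = (((Real.pi / (1 - z ^ 2) : ℝ)) : ℂ) by
        push_cast; ring]
      rw [Real.sqrt_eq_rpow, Complex.ofReal_cpow (by positivity)]
      norm_num
    have hexp : (2 * z - z ^ 2) * (x:ℂ) ^ 2
          - (2 * z * x * (1 - z) * Complex.I) ^ 2 / (4 * (((z:ℂ)) ^ 2 - 1))
        = 2 * (x:ℂ) ^ 2 * z / (1 + z) := by
      have hzne : ((z:ℂ) ^ 2 - 1) ≠ 0 := by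
        intro h
        have : ((z:ℂ)^2 - 1) = (((z^2 - 1 : ℝ)) : ℂ) := by push_cast; ring
        rw [this] at h
        have := Complex.ofReal_eq_zero.mp h
        nlinarith
      have h1z : ((1:ℂ) + z) ≠ 0 := by
        intro h
        have : ((1:ℂ) + z) = (((1 + z : ℝ)) : ℂ) := by push_cast; ring
        rw [this] at h
        have := Complex.ofReal_eq_zero.mp h
        linarith
      have hIsq : (2 * (z:ℂ) * x * (1 - z) * Complex.I) ^ 2
          = -(4 * (z:ℂ)^2 * (x:ℂ)^2 * (1 - (z:ℂ))^2) := by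
        linear_combination (4 * (z:ℂ)^2 * (x:ℂ)^2 * (1 - (z:ℂ))^2) * Complex.I_sq
      rw [hIsq]
      field_simp
      ring
    rw [hcpow, hexp]
    push_cast
    ring
  rw [funext hterm] at key
  rw [funext htsum, hval] at key
  exact key

/-- Mehler's formula on the diagonal. -/
theorem mehler_diagonal (z x : ℝ) (hz0 : 0 ≤ z) (hz1 : z < 1) :
    HasSum
      (fun k : ℕ =>
        z ^ k * (1 / (Real.sqrt Real.pi * (Nat.factorial k : ℝ) * 2 ^ k)) *
          (physHermite k x) ^ 2 * Real.exp (-(x ^ 2)))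
      (1 / Real.sqrt (Real.pi * (1 - z ^ 2)) * Real.exp (-(x ^ 2) * (1 - z) / (1 + z))) := by
  have hsp : (0:ℝ) < Real.sqrt Real.pi := Real.sqrt_pos.mpr Real.pi_pos
  have hz2 : (0:ℝ) < 1 - z ^ 2 := by nlinarith
  have h1z : (0:ℝ) < 1 + z := by linarith
  have hspc : ((Real.sqrt Real.pi : ℝ) : ℂ) ≠ 0 := by
    exact_mod_cast hsp.ne'
  set Cc : ℂ := ((Real.exp (-(x ^ 2)) : ℝ) : ℂ) / (((Real.sqrt Real.pi : ℝ) : ℂ)) ^ 3 with hCc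
  have Hs := (meh_step2 x z hz0 hz1).mul_left Cc
  apply Complex.hasSum_ofReal.mp
  have hfun : (fun k : ℕ => ((z ^ k * (1 / (Real.sqrt Real.pi * (Nat.factorial k : ℝ) * 2 ^ k)) *
          (physHermite k x) ^ 2 * Real.exp (-(x ^ 2)) : ℝ) : ℂ))
      = fun k : ℕ => Cc * ((2 * (z:ℂ)) ^ k / (k.factorial : ℂ) * (mehI x k * mehI x k)) := by
    funext k
    have hH : ((physHermite k x : ℝ) : ℂ) * ((Real.sqrt Real.pi : ℝ) : ℂ) = 2 ^ k * mehI x k := by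
      rw [physHermite_eq_eval]
      exact mehP_eval_sqrtpi x k
    have h2k : ((2:ℂ)) ^ k ≠ 0 := pow_ne_zero k two_ne_zero
    have hM : mehI x k = ((physHermite k x : ℝ) : ℂ) * ((Real.sqrt Real.pi : ℝ) : ℂ) / 2 ^ k := by
      rw [eq_div_iff h2k]
      linear_combination -hH
    have hfk : ((k.factorial : ℕ) : ℂ) ≠ 0 := by exact_mod_cast k.factorial_pos.ne'
    rw [hM, hCc]
    push_cast
    field_simp
    ring
  have hsum : ((1 / Real.sqrt (Real.pi * (1 - z ^ 2)) * Real.exp (-(x ^ 2) * (1 - z) / (1 + z)) : ℝ) : ℂ)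
      = Cc * (((Real.sqrt Real.pi * Real.sqrt (Real.pi / (1 - z ^ 2)) : ℝ) : ℂ)
          * Complex.exp (2 * (x:ℂ) ^ 2 * z / (1 + z))) := by
    have e1 : Real.sqrt (Real.pi * (1 - z ^ 2)) = Real.sqrt Real.pi * Real.sqrt (1 - z ^ 2) :=
      Real.sqrt_mul Real.pi_pos.le _
    have e2 : Real.sqrt (Real.pi / (1 - z ^ 2)) = Real.sqrt Real.pi / Real.sqrt (1 - z ^ 2) :=
      Real.sqrt_div Real.pi_pos.le _
    have h1zs : (0:ℝ) < Real.sqrt (1 - z ^ 2) := Real.sqrt_pos.mpr hz2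
    have hcexp : Complex.exp (2 * (x:ℂ) ^ 2 * z / (1 + z))
        = ((Real.exp (2 * x ^ 2 * z / (1 + z)) : ℝ) : ℂ) := by
      rw [Complex.ofReal_exp]
      push_cast
      ring_nf
    rw [hcexp, hCc, e1, e2]
    have hreal : 1 / (Real.sqrt Real.pi * Real.sqrt (1 - z ^ 2)) * Real.exp (-(x ^ 2) * (1 - z) / (1 + z))
        = Real.exp (-(x ^ 2)) / (Real.sqrt Real.pi) ^ 3
          * ((Real.sqrt Real.pi * (Real.sqrt Real.pi / Real.sqrt (1 - z ^ 2)))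
              * Real.exp (2 * x ^ 2 * z / (1 + z))) := by
      have hexp : Real.exp (-(x ^ 2)) * Real.exp (2 * x ^ 2 * z / (1 + z))
          = Real.exp (-(x ^ 2 * (1 - z)) / (1 + z)) := by
        rw [← Real.exp_add]
        congr 1
        field_simp
        ring
      have hpi : Real.sqrt Real.pi * Real.sqrt Real.pi = Real.pi :=
        Real.mul_self_sqrt Real.pi_pos.le
      field_simp
      rw [← Real.exp_add]
      congr 1
      field_simp
      ring
    have hrealC := congrArg (fun r : ℝ => (r : ℂ)) hreal
    push_cast at hrealC
    push_cast
    linear_combination hrealC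
  rw [hfun, hsum]
  exact Hs
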